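/- For a frame of three vector fields with Christoffel symbols Γᵏᵢⱼ and structure coefficients cᵏᵢⱼ = Γᵏᵢⱼ − Γᵏⱼᵢ on Ω ⊆ ℝ³, define the 3×3 matrices A_λ = [[c¹₂₃, Γ¹₃₂, −Γ¹₂₃],[Γ²₃₁, c²₁₃, −Γ²₁₃],[Γ³₂₁, −Γ³₁₂, c³₁₂]] and A_β = [[c¹₂₃, −Γ²₃₁, Γ³₂₁],[−Γ¹₃₂, c²₁₃, Γ³₁₂],[−Γ¹₂₃, Γ²₁₃, c³₁₂]]. Then A_λ = D·A_βᵀ·D where D = diag(1, −1, 1). Consequently rank(A_λ) = rank(A_β) ≤ 2. -/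

import Mathlib

open Matrix

theorem stmt11 (Γ : Fin 3 → Fin 3 → Fin 3 → ℝ) (c : Fin 3 → Fin 3 → Fin 3 → ℝ)
    (hc : ∀ k i j, c k i j = Γ k i j - Γ k j i)
    (Alam Abet D : Matrix (Fin 3) (Fin 3) ℝ)
    (hAlam : Alam = !![c 0 1 2, Γ 0 2 1, -Γ 0 1 2;
                   Γ 1 2 0, c 1 0 2, -Γ 1 0 2;
                   Γ 2 1 0, -Γ 2 0 1, c 2 0 1])
    (hAbet : Abet = !![c 0 1 2, -Γ 1 2 0, Γ 2 1 0;
                   -Γ 0 2 1, c 1 0 2, Γ 2 0 1;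
                   -Γ 0 1 2, Γ 1 0 2, c 2 0 1])
    (hD : D = Matrix.diagonal ![1, -1, 1]) :
    Alam = D * Abetᵀ * D ∧ Alam.rank = Abet.rank ∧ Alam.rank ≤ 2 := by
  have hDdet : IsUnit D.det := by
    rw [hD, det_diagonal]
    norm_num [Fin.prod_univ_three, Matrix.cons_val_two, Matrix.vecHead, Matrix.vecTail]
  have h1 : Alam = D * Abetᵀ * D := by
    subst hAlam hAbet hD
    ext i j
    fin_cases i <;> fin_cases j <;>
      simp [Matrix.mul_apply, Fin.sum_univ_three, Matrix.diagonal, Matrix.transpose_apply, Matrix.vecHead, Matrix.vecTail] <;> ring_nf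
  have h2 : Alam.rank = Abet.rank := by
    rw [h1, Matrix.rank_mul_eq_left_of_isUnit_det D _ hDdet,
      Matrix.rank_mul_eq_right_of_isUnit_det D _ hDdet, Matrix.rank_transpose]
  have hdet : Alam.det = 0 := by
    subst hAlam
    rw [det_fin_three]
    simp only [hc]
    norm_num [Matrix.cons_val_two, Matrix.vecHead, Matrix.vecTail]
    ring
  have hv : ∃ v ≠ 0, Alam.mulVec v = 0 := (Matrix.exists_mulVec_eq_zero_iff).mpr hdet
  obtain ⟨v, hv0, hvA⟩ := hv
  have hker : 0 < Module.finrank ℝ (LinearMap.ker Alam.mulVecLin) := by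
    apply Module.finrank_pos_iff.mpr
    exact nontrivial_of_ne ⟨v, by simpa [Matrix.mulVecLin] using hvA⟩ 0
      (by simp [Subtype.ext_iff, hv0])
  have hsum := LinearMap.finrank_range_add_finrank_ker Alam.mulVecLin
  have hcard : Module.finrank ℝ (Fin 3 → ℝ) = 3 := by simp
  have h3 : Alam.rank ≤ 2 := by
    have : Alam.rank = Module.finrank ℝ (LinearMap.range Alam.mulVecLin) := rfl
    omega
  exact ⟨h1, h2, h3⟩
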